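/- Let q = 3^r, λ the canonical additive character of F_q, and D a finite set with a function Tr : D → F_q such that Σ_{w∈D} λ(a·Tr w) = λ(a)·A·K(λ;a²) for all a ∈ F_q* and some constant A, with |D| = A·B. Then for each β ∈ F_q, the counting function N_D(β) = |{w ∈ D : Tr w = β}| satisfies q·N_D(β) = A·B + A·(q·δ(1,q;β−1) − q + 1), where δ(1,q;γ) = |{α∈F_q* : α + α⁻¹ = γ}|. -/

import Mathlib

open Finset
open scoped Classical

/-- The Kloosterman sum `K(ψ;b) = ∑_{α ∈ F*} ψ(α + b α⁻¹)`. -/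
noncomputable def Kl {F : Type} [Field F] [Fintype F] (ψ : F → ℂ) (b : F) : ℂ :=
  ∑ α : Fˣ, ψ ((α : F) + b * (α : F)⁻¹)

/-- The canonical additive character of a field of characteristic 3. -/
noncomputable def canChar {F : Type} [Field F] [Fintype F] [Algebra (ZMod 3) F] (x : F) : ℂ :=
  Complex.exp (2 * Real.pi * Complex.I * ((Algebra.trace (ZMod 3) F x).val : ℂ) / 3)

/-- `δ(1,q;γ) = |{α ∈ F* : α + α⁻¹ = γ}|`. -/
noncomputable def delta1 {F : Type} [Field F] [Fintype F] (γ : F) : ℕ :=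
  (Finset.univ.filter (fun α : Fˣ => (α : F) + (α : F)⁻¹ = γ)).card

noncomputable def zz : ℂ := Complex.exp (2 * Real.pi * Complex.I / 3)

lemma zz_prim : IsPrimitiveRoot zz 3 := by
  simpa [zz] using Complex.isPrimitiveRoot_exp 3 (by norm_num)

lemma zz_pow_mod (m : ℕ) : zz ^ (m % 3) = zz ^ m := by
  conv_rhs => rw [← Nat.div_add_mod m 3]
  rw [pow_add, pow_mul, zz_prim.pow_eq_one, one_pow, one_mul]

section
variable {F : Type} [Field F] [Fintype F] [Algebra (ZMod 3) F]

lemma canChar_eq (x : F) :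
    canChar x = zz ^ (Algebra.trace (ZMod 3) F x).val := by
  rw [canChar, zz, ← Complex.exp_nat_mul]
  congr 1; ring

lemma canChar_add (x y : F) : canChar (x + y) = canChar x * canChar y := by
  rw [canChar_eq, canChar_eq, canChar_eq, map_add, ← pow_add, ZMod.val_add, zz_pow_mod]

lemma canChar_zero : canChar (0 : F) = 1 := by
  rw [canChar_eq]; simp

lemma canChar_exists_ne : ∃ x : F, canChar x ≠ 1 := by
  haveI : Algebra.IsAlgebraic (ZMod 3) F := Algebra.IsAlgebraic.of_finite _ _
  obtain ⟨x, hx⟩ := Algebra.trace_surjective (ZMod 3) F 1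
  refine ⟨x, ?_⟩
  rw [canChar_eq, hx]
  have h1 : ((1 : ZMod 3)).val = 1 := rfl
  rw [h1, pow_one]
  exact zz_prim.ne_one (by norm_num)

lemma sum_canChar_mul (b : F) :
    ∑ a : F, canChar (a * b) = if b = 0 then (Fintype.card F : ℂ) else 0 := by
  split_ifs with hb
  · simp [hb, canChar_zero, Finset.card_univ]
  · obtain ⟨x, hx⟩ := canChar_exists_ne (F := F)
    set c : F := x * b⁻¹ with hc
    have hcb : canChar (c * b) ≠ 1 := by
      have hx2 : c * b = x := by
        rw [hc, mul_assoc, inv_mul_cancel₀ hb, mul_one]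
      rwa [hx2]
    have key : canChar (c * b) * ∑ a : F, canChar (a * b) = ∑ a : F, canChar (a * b) := by
      rw [Finset.mul_sum]
      refine Fintype.sum_equiv (Equiv.addLeft c) _ _ (fun a => ?_)
      rw [← canChar_add, ← add_mul]
      rfl
    have h0 : (canChar (c * b) - 1) * ∑ a : F, canChar (a * b) = 0 := by
      rw [sub_mul, one_mul, key, sub_self]
    rcases mul_eq_zero.mp h0 with h | h
    · exact absurd (by linear_combination h) hcb
    · exact h

lemma Kl_sq (a : F) (ha : a ≠ 0) :
    Kl canChar (a ^ 2) = ∑ α : Fˣ, canChar (a * ((α : F) + (α : F)⁻¹)) := by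
  rw [Kl]
  refine (Fintype.sum_equiv (Equiv.mulLeft (Units.mk0 a ha)) _ _ (fun α => ?_)).symm
  have hα : (α : F) ≠ 0 := α.ne_zero
  have h1 : ((Equiv.mulLeft (Units.mk0 a ha) α : Fˣ) : F) = a * (α : F) := rfl
  rw [h1]
  congr 1
  field_simp

end

theorem stmt16 {F : Type} [Field F] [Fintype F] [Algebra (ZMod 3) F]
    (r : ℕ) (hr : 0 < r) (hcard : Fintype.card F = 3 ^ r)
    (D : Type) [Fintype D] (Tr : D → F) (A B : ℂ)
    (hyp : ∀ a : F, a ≠ 0 →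
      ∑ w : D, canChar (a * Tr w) = canChar a * A * Kl canChar (a ^ 2))
    (hDcard : (Fintype.card D : ℂ) = A * B)
    (β : F) :
    (Fintype.card F : ℂ) * ((Finset.univ.filter (fun w : D => Tr w = β)).card : ℂ)
      = A * B + A * ((Fintype.card F : ℂ) * (delta1 (β - 1) : ℂ)
          - (Fintype.card F : ℂ) + 1) := by
  set q : ℂ := (Fintype.card F : ℂ) with hq
  -- Step A : double sum equals q * N
  have stepA : ∑ a : F, ∑ w : D, canChar (a * (Tr w - β))
      = q * ((Finset.univ.filter (fun w : D => Tr w = β)).card : ℂ) := by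
    rw [Finset.sum_comm]
    have : ∀ w : D, ∑ a : F, canChar (a * (Tr w - β)) = if Tr w = β then q else 0 := by
      intro w
      rw [sum_canChar_mul]
      congr 1
      simp [sub_eq_zero]
    rw [Finset.sum_congr rfl (fun w _ => this w), ← Finset.sum_filter,
      Finset.sum_const, nsmul_eq_mul, mul_comm]
  -- split off a = 0
  have h0mem : (0 : F) ∈ (Finset.univ : Finset F) := Finset.mem_univ 0
  have split : ∑ a : F, ∑ w : D, canChar (a * (Tr w - β))
      = (∑ w : D, canChar ((0:F) * (Tr w - β)))
        + ∑ a ∈ Finset.univ.erase (0:F), ∑ w : D, canChar (a * (Tr w - β)) :=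
    (Finset.add_sum_erase _ _ h0mem).symm
  have zeroterm : ∑ w : D, canChar ((0:F) * (Tr w - β)) = A * B := by
    simp only [zero_mul, canChar_zero]
    rw [Finset.sum_const, nsmul_eq_mul, mul_one, Finset.card_univ, hDcard]
  -- Step C/D : nonzero terms
  have stepC : ∀ a ∈ Finset.univ.erase (0:F),
      ∑ w : D, canChar (a * (Tr w - β))
        = A * ∑ α : Fˣ, canChar (a * ((1 - β) + ((α : F) + (α : F)⁻¹))) := by
    intro a hamem
    have ha : a ≠ 0 := (Finset.mem_erase.mp hamem).1
    have e1 : ∀ w : D, canChar (a * (Tr w - β)) = canChar (a * Tr w) * canChar (-(a * β)) := by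
      intro w
      rw [← canChar_add]
      congr 1
      ring
    have e3 : ∀ α : Fˣ, canChar a * canChar (-(a * β)) * canChar (a * ((α : F) + (α : F)⁻¹))
        = canChar (a * ((1 - β) + ((α : F) + (α : F)⁻¹))) := by
      intro α
      rw [← canChar_add, ← canChar_add]
      congr 1
      ring
    have rhs : ∑ α : Fˣ, canChar (a * ((1 - β) + ((α : F) + (α : F)⁻¹)))
        = canChar a * canChar (-(a * β)) * ∑ α : Fˣ, canChar (a * ((α : F) + (α : F)⁻¹)) := by
      rw [Finset.mul_sum]
      exact Finset.sum_congr rfl (fun α _ => (e3 α).symm)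
    rw [Finset.sum_congr rfl (fun w _ => e1 w), ← Finset.sum_mul, hyp a ha, Kl_sq a ha, rhs]
    ring
  -- Step E
  have stepE : ∑ a ∈ Finset.univ.erase (0:F),
      ∑ α : Fˣ, canChar (a * ((1 - β) + ((α : F) + (α : F)⁻¹)))
      = q * (delta1 (β - 1) : ℂ) - q + 1 := by
    rw [Finset.sum_comm]
    have inner : ∀ α : Fˣ,
        ∑ a ∈ Finset.univ.erase (0:F), canChar (a * ((1 - β) + ((α : F) + (α : F)⁻¹)))
        = (if (α : F) + (α : F)⁻¹ = β - 1 then q else 0) - 1 := by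
      intro α
      set c : F := (1 - β) + ((α : F) + (α : F)⁻¹) with hcdef
      have : ∑ a ∈ Finset.univ.erase (0:F), canChar (a * c)
          = (∑ a : F, canChar (a * c)) - canChar ((0:F) * c) := by
        rw [← Finset.add_sum_erase _ _ h0mem]; ring
      rw [this, sum_canChar_mul, zero_mul, canChar_zero]
      have hiff : c = 0 ↔ (α : F) + (α : F)⁻¹ = β - 1 := by
        rw [hcdef]
        constructor <;> intro h <;> linear_combination h
      rw [if_congr hiff rfl rfl]
    rw [Finset.sum_congr rfl (fun α _ => inner α), Finset.sum_sub_distrib,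
      ← Finset.sum_filter, Finset.sum_const, Finset.sum_const, nsmul_eq_mul, nsmul_eq_mul,
      mul_one, mul_comm]
    have hcardu : ((Finset.univ : Finset Fˣ).card : ℂ) = q - 1 := by
      rw [Finset.card_univ, Fintype.card_units, hq]
      have : 1 ≤ Fintype.card F := Fintype.card_pos
      push_cast [Nat.cast_sub this]
      ring
    rw [hcardu, delta1]
    ring
  -- assemble
  calc q * ((Finset.univ.filter (fun w : D => Tr w = β)).card : ℂ)
      = ∑ a : F, ∑ w : D, canChar (a * (Tr w - β)) := stepA.symm
    _ = A * B + ∑ a ∈ Finset.univ.erase (0:F), ∑ w : D, canChar (a * (Tr w - β)) := by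
        rw [split, zeroterm]
    _ = A * B + A * ∑ a ∈ Finset.univ.erase (0:F),
          ∑ α : Fˣ, canChar (a * ((1 - β) + ((α : F) + (α : F)⁻¹))) := by
        rw [Finset.sum_congr rfl stepC, ← Finset.mul_sum]
    _ = A * B + A * (q * (delta1 (β - 1) : ℂ) - q + 1) := by rw [stepE]
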